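/- arXiv:2304.01324 — 4 statements merged into one kernel-verified Lean document; each statement's English description precedes it below -/
import Mathlib

section
/- Under the assumptions that λ_n is an eigenvalue of the self-adjoint compact operator K with dist(λ_n, spec(K)\{λ_n}) ≥ ρ and ‖K − K^δ‖ ≤ δ < ρ/2, the spectral Riesz projections P_n = (2πi)^{-1}∮_{Γ_n}(λI − K)^{-1}dλ and P_n^δ = (2πi)^{-1}∮_{Γ_n}(λI − K^δ)^{-1}dλ satisfy ‖P_n − P_n^δ‖ ≤ δ/(ρ/2 − δ). -/
open scoped Real ENNReal NNReal

section helpers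
variable {A : Type*} [CStarAlgebra A]

lemma aux_isStarNormal_inv (u : Aˣ) (h : IsStarNormal (u : A)) :
    IsStarNormal (↑u⁻¹ : A) := by
  constructor
  have h1 : Commute ((u : A)) ((star u : Aˣ) : A) := h.star_comm_self.symm
  have h2 := (h1.units_inv_left).units_inv_right
  simpa [Units.coe_star_inv] using h2.symm

lemma aux_resolvent_norm {a : A} (ha : IsStarNormal a) {r : ℝ} (hr : 0 < r)
    (hspec : ∀ m ∈ spectrum ℂ a, r ≤ ‖m‖) :
    IsUnit a ∧ ‖Ring.inverse a‖ ≤ r⁻¹ := by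
  have hunit : IsUnit a := by
    by_contra hcon
    have h0 : (0 : ℂ) ∈ spectrum ℂ a := (spectrum.zero_mem_iff (R := ℂ)).mpr hcon
    have := hspec 0 h0
    simp at this
    linarith
  obtain ⟨u, rfl⟩ := hunit
  refine ⟨⟨u, rfl⟩, ?_⟩
  rw [Ring.inverse_unit]
  letI : IsStarNormal ((u : A)) := ha
  letI : IsStarNormal ((↑u⁻¹ : A)) := aux_isStarNormal_inv u ha
  have hrad : spectralRadius ℂ ((↑u⁻¹ : A)) = ‖(↑u⁻¹ : A)‖₊ :=
    IsStarNormal.spectralRadius_eq_nnnorm _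
  have hb : spectralRadius ℂ ((↑u⁻¹ : A)) ≤ ENNReal.ofReal r⁻¹ := by
    rw [spectralRadius]
    refine iSup₂_le fun k hk => ?_
    rw [← spectrum.map_inv, Set.mem_inv] at hk
    have hk' := hspec _ hk
    rcases eq_or_ne k 0 with rfl | hk0
    · simp
    · have : ‖k‖ ≤ r⁻¹ := by
        rw [norm_inv] at hk'
        have h2 := inv_anti₀ hr hk'
        rwa [inv_inv] at h2
      calc (‖k‖₊ : ℝ≥0∞) = ENNReal.ofReal ‖k‖ := (ofReal_norm k).symm
        _ ≤ ENNReal.ofReal r⁻¹ := ENNReal.ofReal_le_ofReal this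
  rw [hrad] at hb
  rw [← enorm_eq_nnnorm, ← ofReal_norm, ENNReal.ofReal_le_ofReal_iff (by positivity)] at hb
  exact hb

end helpers

section helpers2
variable {A : Type*} [NormedRing A] [CompleteSpace A]

lemma aux_perturb (u : Aˣ) (b : A) (C d : ℝ) (hinv : ‖(↑u⁻¹ : A)‖ ≤ C)
    (hd : ‖(↑u : A) - b‖ ≤ d) (hd0 : 0 ≤ d) (hCd : C * d < 1) (h1 : ‖(1 : A)‖ ≤ 1) :
    IsUnit b ∧ ‖Ring.inverse b‖ ≤ C / (1 - C * d) := by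
  have hC0 : 0 ≤ C := le_trans (norm_nonneg _) hinv
  set t : A := ↑u⁻¹ * ((↑u : A) - b) with ht_def
  have htn : ‖t‖ ≤ C * d :=
    le_trans (norm_mul_le _ _) (mul_le_mul hinv hd (norm_nonneg _) hC0)
  have ht1 : ‖t‖ < 1 := lt_of_le_of_lt htn hCd
  have hb : b = ↑u * (1 - t) := by
    rw [ht_def, mul_sub, mul_one, Units.mul_inv_cancel_left, sub_sub_cancel]
  set v : Aˣ := u * Units.oneSub t ht1 with hv
  have hbv : b = ↑v := by rw [hv, Units.val_mul, Units.val_oneSub, hb]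
  refine ⟨⟨v, hbv.symm⟩, ?_⟩
  rw [hbv, Ring.inverse_unit, hv, mul_inv_rev, Units.val_mul]
  have hgeom : ‖(↑(Units.oneSub t ht1)⁻¹ : A)‖ ≤ (1 - C * d)⁻¹ := by
    have h2 : ‖∑' n : ℕ, t ^ n‖ ≤ ‖(1 : A)‖ - 1 + (1 - ‖t‖)⁻¹ :=
      tsum_geometric_le_of_norm_lt_one t ht1
    have h3 : (1 - ‖t‖)⁻¹ ≤ (1 - C * d)⁻¹ := by
      apply inv_anti₀ (by linarith) (by linarith)
    calc ‖(↑(Units.oneSub t ht1)⁻¹ : A)‖ = ‖∑' n : ℕ, t ^ n‖ := rfl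
      _ ≤ ‖(1 : A)‖ - 1 + (1 - ‖t‖)⁻¹ := h2
      _ ≤ (1 - C * d)⁻¹ := by linarith
  calc ‖(↑(Units.oneSub t ht1)⁻¹ : A) * ↑u⁻¹‖ ≤ ‖(↑(Units.oneSub t ht1)⁻¹ : A)‖ * ‖(↑u⁻¹ : A)‖ :=
        norm_mul_le _ _
    _ ≤ (1 - C * d)⁻¹ * C := by
        apply mul_le_mul hgeom hinv (norm_nonneg _) (inv_nonneg.mpr (by linarith))
    _ = C / (1 - C * d) := by rw [div_eq_mul_inv, mul_comm]

lemma aux_res_id {a b : A} (ha : IsUnit a) (hb : IsUnit b) :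
    Ring.inverse a - Ring.inverse b = Ring.inverse a * (b - a) * Ring.inverse b := by
  obtain ⟨u, rfl⟩ := ha
  obtain ⟨v, rfl⟩ := hb
  rw [Ring.inverse_unit, Ring.inverse_unit, mul_sub, sub_mul, mul_assoc]
  simp [Units.mul_inv, Units.inv_mul]

end helpers2



set_option maxHeartbeats 1000000 in
/-- If `λ_n` is an eigenvalue of the self-adjoint compact operator `K` with
`dist(λ_n, spec(K)\{λ_n}) ≥ ρ` and `‖K - K^δ‖ ≤ δ < ρ/2`, then the Riesz spectral
projections `P_n = (2πi)⁻¹ ∮_{Γ_n} (λI - K)⁻¹ dλ` and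
`P_n^δ = (2πi)⁻¹ ∮_{Γ_n} (λI - K^δ)⁻¹ dλ` (over the circle `Γ_n` of radius `ρ/2`
around `λ_n`) satisfy `‖P_n - P_n^δ‖ ≤ δ/(ρ/2 - δ)`. -/
theorem stmt2 {X : Type*} [NormedAddCommGroup X] [InnerProductSpace ℂ X] [CompleteSpace X]
    (K Kδ : X →L[ℂ] X)
    (hK : IsSelfAdjoint K) (hKδ : IsSelfAdjoint Kδ)
    (hKc : IsCompactOperator ⇑K) (hKδc : IsCompactOperator ⇑Kδ)
    (μ ρ δ : ℝ) (hρ : 0 < ρ) (hδ : 0 < δ) (hδρ : δ < ρ / 2)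
    (hμ : (μ : ℂ) ∈ spectrum ℂ K)
    (hiso : ρ ≤ Metric.infDist (μ : ℂ) (spectrum ℂ K \ {(μ : ℂ)}))
    (hnorm : ‖K - Kδ‖ ≤ δ) :
    ‖((2 * π * Complex.I : ℂ)⁻¹ •
        (∮ z in C((μ : ℂ), ρ / 2), Ring.inverse (z • (1 : X →L[ℂ] X) - K))) -
      ((2 * π * Complex.I : ℂ)⁻¹ •
        (∮ z in C((μ : ℂ), ρ / 2), Ring.inverse (z • (1 : X →L[ℂ] X) - Kδ)))‖ ≤
      δ / (ρ / 2 - δ) := by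
  have hr : (0 : ℝ) < ρ / 2 := by linarith
  set f : ℂ → (X →L[ℂ] X) := fun z => Ring.inverse (z • (1 : X →L[ℂ] X) - K) with hf_def
  set g : ℂ → (X →L[ℂ] X) := fun z => Ring.inverse (z • (1 : X →L[ℂ] X) - Kδ) with hg_def
  -- distance from circle to spectrum
  have hdist : ∀ z ∈ Metric.sphere (μ : ℂ) (ρ / 2), ∀ κ ∈ spectrum ℂ K,
      ρ / 2 ≤ ‖z - κ‖ := by
    intro z hz κ hκ
    rw [Metric.mem_sphere] at hz
    rw [← dist_eq_norm]
    rcases eq_or_ne κ (μ : ℂ) with rfl | hne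
    · rw [hz]
    · have h1 : Metric.infDist (μ : ℂ) (spectrum ℂ K \ {(μ : ℂ)}) ≤ dist (μ : ℂ) κ :=
        Metric.infDist_le_dist_of_mem ⟨hκ, hne⟩
      have h2 : dist (μ : ℂ) κ ≤ dist (μ : ℂ) z + dist z κ := dist_triangle _ _ _
      rw [dist_comm (μ : ℂ) z, hz] at h2
      linarith
  -- star-normality of the resolvent argument
  have hnormal : ∀ (z : ℂ) (T : X →L[ℂ] X), IsSelfAdjoint T → IsStarNormal (z • (1 : X →L[ℂ] X) - T) := by
    intro z T hT
    have heq : star (z • (1 : X →L[ℂ] X) - T) * (z • (1 : X →L[ℂ] X) - T) =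
        (z • (1 : X →L[ℂ] X) - T) * star (z • (1 : X →L[ℂ] X) - T) := by
      simp only [star_sub, star_smul, star_one, hT.star_eq, sub_mul, mul_sub, smul_mul_assoc,
        mul_smul_comm, one_mul, mul_one, smul_sub, smul_smul]
      rw [mul_comm z (star z)]
      abel
    exact ⟨heq⟩
  -- bound for the resolvent of K on the circle
  have key1 : ∀ z ∈ Metric.sphere (μ : ℂ) (ρ / 2),
      IsUnit (z • (1 : X →L[ℂ] X) - K) ∧ ‖f z‖ ≤ (ρ / 2)⁻¹ := by
    intro z hz
    refine aux_resolvent_norm (hnormal z K hK) hr fun m hm => ?_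
    rw [← Algebra.algebraMap_eq_smul_one, ← spectrum.singleton_sub_eq, Set.mem_sub] at hm
    obtain ⟨x, hx, κ, hκ, rfl⟩ := hm
    rw [Set.mem_singleton_iff] at hx
    subst hx
    exact hdist _ hz κ hκ
  -- bound for the resolvent of Kδ on the circle
  have hCd : (ρ / 2)⁻¹ * δ < 1 := by
    rw [inv_mul_lt_iff₀ hr, mul_one]
    exact hδρ
  have key2 : ∀ z ∈ Metric.sphere (μ : ℂ) (ρ / 2),
      IsUnit (z • (1 : X →L[ℂ] X) - Kδ) ∧ ‖g z‖ ≤ (ρ / 2)⁻¹ / (1 - (ρ / 2)⁻¹ * δ) := by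
    intro z hz
    obtain ⟨hu, hb⟩ := key1 z hz
    have hspec := hu.unit_spec
    refine aux_perturb hu.unit (z • (1 : X →L[ℂ] X) - Kδ) ((ρ / 2)⁻¹) δ ?_ ?_ hδ.le hCd ?_
    · have : (↑hu.unit⁻¹ : X →L[ℂ] X) = Ring.inverse (z • (1 : X →L[ℂ] X) - K) := by
        rw [← Ring.inverse_unit, hspec]
      rw [this]
      exact hb
    · rw [hspec]
      have : (z • (1 : X →L[ℂ] X) - K) - (z • (1 : X →L[ℂ] X) - Kδ) = Kδ - K := by abel
      rw [this, norm_sub_rev]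
      exact hnorm
    · exact ContinuousLinearMap.norm_id_le
  -- pointwise bound for the difference
  set M : ℝ := (ρ / 2)⁻¹ * δ * ((ρ / 2)⁻¹ / (1 - (ρ / 2)⁻¹ * δ)) with hM
  have hbound : ∀ z ∈ Metric.sphere (μ : ℂ) (ρ / 2), ‖f z - g z‖ ≤ M := by
    intro z hz
    obtain ⟨hu1, hb1⟩ := key1 z hz
    obtain ⟨hu2, hb2⟩ := key2 z hz
    have hdiff : (z • (1 : X →L[ℂ] X) - Kδ) - (z • (1 : X →L[ℂ] X) - K) = K - Kδ := by abel
    show ‖Ring.inverse (z • (1 : X →L[ℂ] X) - K) - Ring.inverse (z • (1 : X →L[ℂ] X) - Kδ)‖ ≤ M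
    rw [aux_res_id hu1 hu2, hdiff]
    calc ‖Ring.inverse (z • (1 : X →L[ℂ] X) - K) * (K - Kδ) * Ring.inverse (z • (1 : X →L[ℂ] X) - Kδ)‖
        ≤ ‖Ring.inverse (z • (1 : X →L[ℂ] X) - K) * (K - Kδ)‖ * ‖Ring.inverse (z • (1 : X →L[ℂ] X) - Kδ)‖ :=
          norm_mul_le _ _
      _ ≤ (‖Ring.inverse (z • (1 : X →L[ℂ] X) - K)‖ * ‖K - Kδ‖) * ‖Ring.inverse (z • (1 : X →L[ℂ] X) - Kδ)‖ :=
          mul_le_mul_of_nonneg_right (norm_mul_le _ _) (norm_nonneg _)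
      _ ≤ ((ρ / 2)⁻¹ * δ) * ((ρ / 2)⁻¹ / (1 - (ρ / 2)⁻¹ * δ)) := by
          have h1mCd : (0:ℝ) < 1 - (ρ / 2)⁻¹ * δ := by linarith
          refine mul_le_mul (mul_le_mul hb1 hnorm (norm_nonneg _) (inv_nonneg.mpr hr.le))
            hb2 (norm_nonneg _) ?_
          positivity
      _ = M := rfl
  -- integrability
  have hcont : ∀ (T : X →L[ℂ] X), (∀ z ∈ Metric.sphere (μ : ℂ) (ρ / 2), IsUnit (z • (1 : X →L[ℂ] X) - T)) →
      CircleIntegrable (fun z => Ring.inverse (z • (1 : X →L[ℂ] X) - T)) (μ : ℂ) (ρ / 2) := by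
    intro T hT
    apply ContinuousOn.circleIntegrable hr.le
    intro z hz
    have hg : Continuous fun w : ℂ => w • (1 : X →L[ℂ] X) - T :=
      (continuous_id.smul continuous_const).sub continuous_const
    have h1 := NormedRing.inverse_continuousAt (hT z hz).unit
    rw [(hT z hz).unit_spec] at h1
    have h2 : ContinuousAt (Ring.inverse ∘ fun w : ℂ => w • (1 : X →L[ℂ] X) - T) z :=
      ContinuousAt.comp h1 hg.continuousAt
    exact h2.continuousWithinAt
  have hfI : CircleIntegrable f (μ : ℂ) (ρ / 2) := hcont K fun z hz => (key1 z hz).1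
  have hgI : CircleIntegrable g (μ : ℂ) (ρ / 2) := hcont Kδ fun z hz => (key2 z hz).1
  -- assemble
  rw [← smul_sub, ← circleIntegral.integral_sub hfI hgI, norm_smul]
  have hc : ‖(2 * (π : ℂ) * Complex.I)⁻¹‖ = (2 * π)⁻¹ := by
    rw [norm_inv]
    simp [Complex.norm_I, abs_of_nonneg Real.pi_pos.le]
  have hint : ‖∮ z in C((μ : ℂ), ρ / 2), (f z - g z)‖ ≤ 2 * π * (ρ / 2) * M :=
    circleIntegral.norm_integral_le_of_norm_le_const hr.le hbound
  rw [hc]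
  have hπ : (0:ℝ) < π := Real.pi_pos
  have hπ' : (π : ℝ) ≠ 0 := hπ.ne'
  have hρ2 : (ρ / 2 : ℝ) ≠ 0 := hr.ne'
  have hsub : (ρ / 2 - δ : ℝ) ≠ 0 := by intro h; linarith
  have hform : (1 - (ρ / 2)⁻¹ * δ : ℝ) = (ρ / 2)⁻¹ * (ρ / 2 - δ) := by
    rw [mul_sub, inv_mul_cancel₀ hρ2]
  have e3 : ((ρ / 2)⁻¹ / (1 - (ρ / 2)⁻¹ * δ) : ℝ) = (ρ / 2 - δ)⁻¹ := by
    rw [hform, div_mul_eq_div_div, div_self (inv_ne_zero hρ2), one_div]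
  calc (2 * π)⁻¹ * ‖∮ z in C((μ : ℂ), ρ / 2), (f z - g z)‖
      ≤ (2 * π)⁻¹ * (2 * π * (ρ / 2) * M) := by
        apply mul_le_mul_of_nonneg_left hint
        positivity
    _ = (ρ / 2) * M := by
        have h2π : (2 * π : ℝ) ≠ 0 := by positivity
        field_simp
    _ = δ / (ρ / 2 - δ) := by
        rw [hM, e3, ← mul_assoc, ← mul_assoc, mul_inv_cancel₀ hρ2, one_mul, ← div_eq_mul_inv]
end

section
/- If the isolation distance satisfies dist(λ_n, spec(K)\{λ_n}) ≥ 2√δ with δ ∈ (0, 1/4) and ‖K − K^δ‖ ≤ δ, then the spectral projections satisfy ‖P_n − P_n^δ‖ ≤ 2√δ. -/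
open scoped Real

section Aux

variable {A : Type*} [CStarAlgebra A]

lemma aux_starNormal {T : A} (hT : IsSelfAdjoint T) (z : ℂ) :
    IsStarNormal (algebraMap ℂ A z - T) := by
  constructor
  have hs : star (algebraMap ℂ A z - T) = algebraMap ℂ A (star z) - T := by
    rw [star_sub, hT.star_eq, algebraMap_star_comm]
  rw [hs]
  exact Commute.sub_left (Algebra.commute_algebraMap_left _ _)
    ((Algebra.commute_algebraMap_right _ _).sub_right (Commute.refl T))

lemma aux_resolvent {T : A} (hT : IsSelfAdjoint T) {z : ℂ} {r : ℝ} (hr : 0 < r)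
    (h : ∀ w ∈ spectrum ℂ T, r ≤ dist z w) :
    IsUnit (algebraMap ℂ A z - T) ∧ ‖Ring.inverse (algebraMap ℂ A z - T)‖ ≤ 1 / r := by
  have hz : z ∉ spectrum ℂ T := by
    intro hz
    have := h z hz
    simp at this
    linarith
  have hu : IsUnit (algebraMap ℂ A z - T) := spectrum.notMem_iff.mp hz
  refine ⟨hu, ?_⟩
  set a := algebraMap ℂ A z - T with ha
  have hn : IsStarNormal a := aux_starNormal hT z
  have hcomm : Commute (star (Ring.inverse a)) (Ring.inverse a) := by
    have c : Commute (↑hu.unit : A) (↑hu.star.unit : A) := by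
      rw [hu.unit_spec, hu.star.unit_spec]
      exact hn.star_comm_self.symm
    have c2 := (c.units_inv_left).units_inv_right
    have e1 : (↑hu.unit⁻¹ : A) = Ring.inverse a := by
      rw [← Ring.inverse_unit hu.unit, hu.unit_spec]
    have e2 : (↑hu.star.unit⁻¹ : A) = star (Ring.inverse a) := by
      rw [← Ring.inverse_unit hu.star.unit, hu.star.unit_spec, Ring.inverse_star]
    rw [e1, e2] at c2
    exact c2.symm
  haveI hn' : IsStarNormal (Ring.inverse a) := ⟨hcomm⟩
  have hsr : spectralRadius ℂ (Ring.inverse a) ≤ ENNReal.ofReal (1 / r) := by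
    refine iSup₂_le fun k hk => ?_
    have hinv : Ring.inverse a = (↑hu.unit⁻¹ : A) := by
      rw [← Ring.inverse_unit hu.unit, hu.unit_spec]
    rw [hinv, ← spectrum.map_inv, Set.mem_inv] at hk
    rw [hu.unit_spec, ← spectrum.singleton_sub_eq] at hk
    obtain ⟨x, hx, w, hw, hxw⟩ := hk
    rw [Set.mem_singleton_iff] at hx
    subst hx
    have hdist : r ≤ ‖k⁻¹‖ := by
      rw [← hxw]
      simpa [dist_eq_norm] using h w hw
    have hk0 : k ≠ 0 := by
      intro h0
      rw [h0] at hdist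
      simp at hdist
      linarith
    have hkle : ‖k‖ ≤ 1 / r := by
      rw [norm_inv] at hdist
      rw [le_div_iff₀ hr]
      calc ‖k‖ * r ≤ ‖k‖ * ‖k‖⁻¹ :=
            mul_le_mul_of_nonneg_left hdist (norm_nonneg k)
        _ = 1 := mul_inv_cancel₀ (by simpa using hk0)
    calc (‖k‖₊ : ENNReal) = ENNReal.ofReal ‖k‖ := (ofReal_norm k).symm
      _ ≤ ENNReal.ofReal (1 / r) := ENNReal.ofReal_le_ofReal hkle
  have hfin := hn'.spectralRadius_eq_nnnorm ▸ hsr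
  have h2 : ((‖Ring.inverse a‖₊ : ENNReal)).toReal ≤ (ENNReal.ofReal (1 / r)).toReal :=
    ENNReal.toReal_mono (by simp) hfin
  rw [ENNReal.toReal_ofReal (by positivity : (0:ℝ) ≤ 1 / r)] at h2
  simpa using h2

lemma aux_spectrum_perturb {T S : A} (hT : IsSelfAdjoint T) {δ : ℝ} (hδ : 0 < δ)
    (hTS : ‖T - S‖ ≤ δ) {w : ℂ} (hw : w ∈ spectrum ℂ S) :
    Metric.infDist w (spectrum ℂ T) ≤ δ := by
  by_contra hcon
  push_neg at hcon
  set r := Metric.infDist (w : ℂ) (spectrum ℂ T) with hrdef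
  have hr : 0 < r := lt_trans hδ hcon
  have hd : ∀ lam ∈ spectrum ℂ T, r ≤ dist w lam := fun lam hlam =>
    Metric.infDist_le_dist_of_mem hlam
  obtain ⟨hu, hb⟩ := aux_resolvent hT hr hd
  set a := algebraMap ℂ A w - T with ha
  have hsmall : ‖-(Ring.inverse a * (T - S))‖ < 1 := by
    rw [norm_neg]
    calc ‖Ring.inverse a * (T - S)‖ ≤ ‖Ring.inverse a‖ * ‖T - S‖ := norm_mul_le _ _
      _ ≤ (1 / r) * δ := mul_le_mul hb hTS (norm_nonneg _) (by positivity)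
      _ < 1 := by
          rw [div_mul_eq_mul_div, one_mul, div_lt_one hr]
          exact hcon
  have hunit2 : IsUnit ((1 : A) + Ring.inverse a * (T - S)) := by
    have := (Units.oneSub _ hsmall).isUnit
    simpa [sub_neg_eq_add] using this
  have hfact : algebraMap ℂ A w - S = a * ((1 : A) + Ring.inverse a * (T - S)) := by
    rw [mul_add, mul_one, ← mul_assoc, Ring.mul_inverse_cancel a hu, one_mul, ha]
    abel
  have : IsUnit (algebraMap ℂ A w - S) := hfact ▸ hu.mul hunit2
  exact (spectrum.mem_iff.mp hw) this

end Aux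

/-- If the isolation distance of the eigenvalue `λ_n` of `K` satisfies
`dist(λ_n, spec(K)\{λ_n}) ≥ 2√δ` with `δ ∈ (0,1/4)` and `‖K - K^δ‖ ≤ δ`, then the Riesz
spectral projections over the circle of radius `√δ` around `λ_n` satisfy
`‖P_n - P_n^δ‖ ≤ 2√δ`. -/
theorem stmt3 {X : Type*} [NormedAddCommGroup X] [InnerProductSpace ℂ X] [CompleteSpace X]
    (K Kδ : X →L[ℂ] X)
    (hK : IsSelfAdjoint K) (hKδ : IsSelfAdjoint Kδ)
    (hKc : IsCompactOperator ⇑K) (hKδc : IsCompactOperator ⇑Kδ)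
    (μ δ : ℝ) (hδ : δ ∈ Set.Ioo (0 : ℝ) (1 / 4))
    (hμ : (μ : ℂ) ∈ spectrum ℂ K)
    (hiso : 2 * Real.sqrt δ ≤ Metric.infDist (μ : ℂ) (spectrum ℂ K \ {(μ : ℂ)}))
    (hnorm : ‖K - Kδ‖ ≤ δ) :
    ‖((2 * π * Complex.I : ℂ)⁻¹ •
        (∮ z in C((μ : ℂ), Real.sqrt δ), Ring.inverse (z • (1 : X →L[ℂ] X) - K))) -
      ((2 * π * Complex.I : ℂ)⁻¹ •
        (∮ z in C((μ : ℂ), Real.sqrt δ), Ring.inverse (z • (1 : X →L[ℂ] X) - Kδ)))‖ ≤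
      2 * Real.sqrt δ := by
  obtain ⟨hδ0, hδ4⟩ := hδ
  set R := Real.sqrt δ with hRdef
  have hR0 : 0 < R := Real.sqrt_pos.mpr hδ0
  have hRsq : R ^ 2 = δ := Real.sq_sqrt hδ0.le
  have hRhalf : R < 1 / 2 := by
    rw [hRdef]
    rw [show (1:ℝ)/2 = Real.sqrt ((1:ℝ)/4) by
      rw [show (1:ℝ)/4 = (1/2)^2 by norm_num, Real.sqrt_sq (by norm_num)]]
    exact Real.sqrt_lt_sqrt hδ0.le hδ4
  have hδR : δ < R := by nlinarith
  have halg : ∀ z : ℂ, z • (1 : X →L[ℂ] X) = algebraMap ℂ (X →L[ℂ] X) z := fun z =>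
    (Algebra.algebraMap_eq_smul_one z).symm
  have hKdist : ∀ z ∈ Metric.sphere (μ : ℂ) R, ∀ w ∈ spectrum ℂ K, R ≤ dist z w := by
    intro z hz w hw
    rcases eq_or_ne w (μ : ℂ) with rfl | hne
    · rw [Metric.mem_sphere] at hz
      rw [hz]
    · have hw' : w ∈ spectrum ℂ K \ {(μ : ℂ)} := ⟨hw, hne⟩
      have h1 : 2 * R ≤ dist (μ : ℂ) w := le_trans hiso (Metric.infDist_le_dist_of_mem hw')
      have h2 : dist (μ : ℂ) w ≤ dist (μ : ℂ) z + dist z w := dist_triangle _ _ _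
      rw [Metric.mem_sphere, dist_comm] at hz
      rw [hz] at h2
      linarith
  have hKspec_ne : (spectrum ℂ K).Nonempty := ⟨_, hμ⟩
  have hKδdist : ∀ z ∈ Metric.sphere (μ : ℂ) R, ∀ w ∈ spectrum ℂ Kδ, R - δ ≤ dist z w := by
    intro z hz w hw
    have h0 : Metric.infDist w (spectrum ℂ K) ≤ δ := aux_spectrum_perturb hK hδ0 hnorm hw
    have h1 : R ≤ Metric.infDist z (spectrum ℂ K) := by
      rw [Metric.infDist_eq_iInf]
      haveI : Nonempty (spectrum ℂ K) := hKspec_ne.to_subtype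
      exact le_ciInf fun w => hKdist z hz w w.2
    have h2 : Metric.infDist z (spectrum ℂ K) ≤ Metric.infDist w (spectrum ℂ K) + dist z w :=
      Metric.infDist_le_infDist_add_dist
    linarith
  have hRδ0 : 0 < R - δ := by linarith
  have hres : ∀ z ∈ Metric.sphere (μ : ℂ) R,
      IsUnit (z • (1 : X →L[ℂ] X) - K) ∧ ‖Ring.inverse (z • (1 : X →L[ℂ] X) - K)‖ ≤ 1 / R := by
    intro z hz
    rw [halg z]
    exact aux_resolvent hK hR0 (hKdist z hz)
  have hresδ : ∀ z ∈ Metric.sphere (μ : ℂ) R,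
      IsUnit (z • (1 : X →L[ℂ] X) - Kδ) ∧
        ‖Ring.inverse (z • (1 : X →L[ℂ] X) - Kδ)‖ ≤ 1 / (R - δ) := by
    intro z hz
    rw [halg z]
    exact aux_resolvent hKδ hRδ0 (hKδdist z hz)
  have hcontK : ContinuousOn (fun z : ℂ => Ring.inverse (z • (1 : X →L[ℂ] X) - K))
      (Metric.sphere (μ : ℂ) R) := by
    intro z hz
    apply ContinuousAt.continuousWithinAt
    have hcont1 : ContinuousAt (fun z : ℂ => z • (1 : X →L[ℂ] X) - K) z := by fun_prop
    have hu := (hres z hz).1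
    have h2 := NormedRing.inverse_continuousAt hu.unit
    rw [hu.unit_spec] at h2
    exact ContinuousAt.comp (g := Ring.inverse)
      (f := fun z : ℂ => z • (1 : X →L[ℂ] X) - K) h2 hcont1
  have hcontKδ : ContinuousOn (fun z : ℂ => Ring.inverse (z • (1 : X →L[ℂ] X) - Kδ))
      (Metric.sphere (μ : ℂ) R) := by
    intro z hz
    apply ContinuousAt.continuousWithinAt
    have hcont1 : ContinuousAt (fun z : ℂ => z • (1 : X →L[ℂ] X) - Kδ) z := by fun_prop
    have hu := (hresδ z hz).1
    have h2 := NormedRing.inverse_continuousAt hu.unit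
    rw [hu.unit_spec] at h2
    exact ContinuousAt.comp (g := Ring.inverse)
      (f := fun z : ℂ => z • (1 : X →L[ℂ] X) - Kδ) h2 hcont1
  have hintK : CircleIntegrable (fun z : ℂ => Ring.inverse (z • (1 : X →L[ℂ] X) - K)) (μ : ℂ) R :=
    hcontK.circleIntegrable hR0.le
  have hintKδ : CircleIntegrable (fun z : ℂ => Ring.inverse (z • (1 : X →L[ℂ] X) - Kδ))
      (μ : ℂ) R := hcontKδ.circleIntegrable hR0.le
  rw [← smul_sub, ← circleIntegral.integral_sub hintK hintKδ]
  set C : ℝ := (1 / R) * δ * (1 / (R - δ)) with hC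
  have hbound : ∀ z ∈ Metric.sphere (μ : ℂ) R,
      ‖Ring.inverse (z • (1 : X →L[ℂ] X) - K) - Ring.inverse (z • (1 : X →L[ℂ] X) - Kδ)‖ ≤ C := by
    intro z hz
    obtain ⟨huK, hbK⟩ := hres z hz
    obtain ⟨huKδ, hbKδ⟩ := hresδ z hz
    set a := z • (1 : X →L[ℂ] X) - K with ha
    set b := z • (1 : X →L[ℂ] X) - Kδ with hb
    have hid : Ring.inverse a - Ring.inverse b = Ring.inverse a * (K - Kδ) * Ring.inverse b := by
      have h1 : (K - Kδ : X →L[ℂ] X) = b - a := by rw [ha, hb]; abel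
      rw [h1, mul_sub, sub_mul, mul_assoc, Ring.mul_inverse_cancel b huKδ,
        Ring.inverse_mul_cancel a huK, mul_one, one_mul]
    rw [hid]
    calc ‖Ring.inverse a * (K - Kδ) * Ring.inverse b‖
        ≤ ‖Ring.inverse a * (K - Kδ)‖ * ‖Ring.inverse b‖ := norm_mul_le _ _
      _ ≤ (‖Ring.inverse a‖ * ‖K - Kδ‖) * ‖Ring.inverse b‖ :=
          mul_le_mul_of_nonneg_right (norm_mul_le _ _) (norm_nonneg _)
      _ ≤ ((1 / R) * δ) * (1 / (R - δ)) := by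
          apply mul_le_mul _ hbKδ (norm_nonneg _) (by positivity)
          exact mul_le_mul hbK hnorm (norm_nonneg _) (by positivity)
  have hintbound := circleIntegral.norm_integral_le_of_norm_le_const hR0.le hbound
  rw [norm_smul]
  have hnc : ‖(2 * π * Complex.I : ℂ)⁻¹‖ = 1 / (2 * π) := by
    rw [norm_inv]
    simp [abs_of_pos Real.pi_pos]
  rw [hnc]
  calc (1 / (2 * π)) * ‖∮ z in C((μ : ℂ), R), (Ring.inverse (z • (1 : X →L[ℂ] X) - K) -
          Ring.inverse (z • (1 : X →L[ℂ] X) - Kδ))‖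
      ≤ (1 / (2 * π)) * (2 * π * R * C) :=
        mul_le_mul_of_nonneg_left hintbound (by positivity)
    _ = R * C := by
        have hπ : (0:ℝ) < π := Real.pi_pos
        field_simp
    _ ≤ 2 * R := by
        rw [hC]
        have key : R * ((1 / R) * δ * (1 / (R - δ))) = δ / (R - δ) := by
          field_simp
        rw [key, div_le_iff₀ hRδ0]
        nlinarith
end

section
/- The minimizer over x ∈ X of the GLSM functional J_α(x; ℓ) = α⟨x, Ax⟩ + ‖Ax − ℓ‖²_{X*}, where A is a positive compact operator with singular system {λ_n; x_n; ℓ_n}, is given by x^α = Σ_n (λ_n/(αλ_n + λ_n²)) conj(⟨x_n, ℓ⟩) x_n, i.e., the spectral regularization with filter φ_α(t) = t/(α + t). -/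
set_option maxHeartbeats 2000000 in
/-- The minimizer over `x ∈ X` of the GLSM functional
`J_α(x; ℓ) = α⟨x, Ax⟩ + ‖Ax - ℓ‖²_{X*}`, where `A : X → X*` is a positive compact
operator with singular system `{λ_n; x_n; ℓ_n}` (`A x_n = λ_n ℓ_n`), is
`x^α = Σ (λ_n/(αλ_n + λ_n²)) conj(⟨x_n, ℓ⟩) x_n`, i.e. the spectral regularization with
filter `φ_α(t) = t/(α + t)`. -/
theorem stmt14 {X : Type*} [NormedAddCommGroup X] [InnerProductSpace ℂ X] [CompleteSpace X]
    (A : X →SL[starRingEnd ℂ] StrongDual ℂ X)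
    (hAc : IsCompactOperator ⇑A)
    (hApos : ∀ x : X, x ≠ 0 → 0 < ((A x) x).re ∧ ((A x) x).im = 0)
    (lam : ℕ → ℝ) (x : ℕ → X) (l : ℕ → StrongDual ℂ X)
    (hlampos : ∀ n, 0 < lam n) (hx : Orthonormal ℂ x)
    (hAx : ∀ n, A (x n) = (lam n : ℂ) • l n)
    (hdual : ∀ n m, (l n) (x m) = if n = m then (1 : ℂ) else 0)
    (hlorth : Orthonormal ℂ (fun n => (InnerProductSpace.toDual ℂ X).symm (l n)))
    (hspan : (Submodule.span ℂ (Set.range x)).topologicalClosure = ⊤)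
    (α : ℝ) (hα : 0 < α) (f : StrongDual ℂ X) (xα : X)
    (hxα : HasSum
      (fun n => (((lam n / (α * lam n + (lam n) ^ 2) : ℝ) : ℂ) *
        (starRingEnd ℂ) (f (x n))) • x n) xα) :
    ∀ y : X,
      α * ((A xα) xα).re + ‖A xα - f‖ ^ 2 ≤ α * ((A y) y).re + ‖A y - f‖ ^ 2 := by
  classical
  set D := InnerProductSpace.toDual ℂ X with hD
  have him : ∀ w : X, ((A w) w).im = 0 := by
    intro w
    by_cases hw : w = 0
    · simp [hw]
    · exact (hApos w hw).2
  have hre : ∀ w : X, 0 ≤ ((A w) w).re := by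
    intro w
    by_cases hw : w = 0
    · simp [hw]
    · exact le_of_lt (hApos w hw).1
  have hsym : ∀ u v : X, ((A u) v).re = ((A v) u).re := by
    intro u v
    have h1 := him (u + Complex.I • v)
    have expand : (A (u + Complex.I • v)) (u + Complex.I • v)
        = (A u) u + (A v) v + Complex.I * ((A u) v) - Complex.I * ((A v) u) := by
      simp only [map_add, map_smulₛₗ, ContinuousLinearMap.add_apply,
        ContinuousLinearMap.smul_apply, map_smul, Complex.conj_I, smul_eq_mul,
        RingHom.id_apply]
      linear_combination (-(A v) v) * Complex.I_sq
    rw [expand] at h1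
    have hu := him u
    have hv := him v
    simp only [Complex.sub_im, Complex.add_im, Complex.mul_im, Complex.I_re, Complex.I_im,
      zero_mul, one_mul, mul_zero] at h1
    linarith
  have hxl : ∀ m, (D.symm (l m) : X) = x m := by
    intro m
    have horth : ∀ n, (inner ℂ (x n) (D.symm (l m) - x m : X) : ℂ) = 0 := by
      intro n
      have h1 : (inner ℂ (D.symm (l m) : X) (x n) : ℂ) = (l m) (x n) := InnerProductSpace.toDual_symm_apply
      have h2 : (inner ℂ (x n) (D.symm (l m) : X) : ℂ) = (starRingEnd ℂ) ((l m) (x n)) := by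
        rw [← h1, inner_conj_symm]
      have h3 := orthonormal_iff_ite.mp hx n m
      rw [inner_sub_right, h2, hdual m n, h3]
      by_cases h : n = m
      · simp [h]
      · simp [h, Ne.symm h]
    have hle : Submodule.span ℂ (Set.range x)
        ≤ (Submodule.span ℂ ({D.symm (l m) - x m} : Set X))ᗮ := by
      rw [Submodule.span_le]
      rintro _ ⟨n, rfl⟩
      exact (Submodule.mem_orthogonal_singleton_iff_inner_left).mpr (horth n)
    have htop : (⊤ : Submodule ℂ X) ≤ (Submodule.span ℂ ({D.symm (l m) - x m} : Set X))ᗮ := by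
      rw [← hspan]
      exact Submodule.topologicalClosure_minimal _ hle (Submodule.isClosed_orthogonal _)
    have hw0 : (D.symm (l m) : X) - x m = 0 := by
      have hmem : (D.symm (l m) : X) - x m
          ∈ (Submodule.span ℂ ({D.symm (l m) - x m} : Set X))ᗮ := htop Submodule.mem_top
      exact inner_self_eq_zero.mp
        ((Submodule.mem_orthogonal_singleton_iff_inner_left).mp hmem)
    exact sub_eq_zero.mp hw0
  -- series for A xα
  have hAxα : HasSum (fun n => ((((lam n / (α * lam n + (lam n) ^ 2) : ℝ) : ℂ) *
      f (x n) * (lam n : ℂ)) • l n)) (A xα) := by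
    have h0 := A.hasSum hxα
    have hfun : (fun n => A ((((lam n / (α * lam n + (lam n) ^ 2) : ℝ) : ℂ) *
        (starRingEnd ℂ) (f (x n))) • x n))
        = fun n => ((((lam n / (α * lam n + (lam n) ^ 2) : ℝ) : ℂ) *
          f (x n) * (lam n : ℂ)) • l n) := by
      funext n
      rw [map_smulₛₗ, hAx n, smul_smul]
      congr 1
      simp [map_mul, Complex.conj_ofReal, mul_comm, mul_assoc, mul_left_comm]
    rwa [hfun] at h0
  -- value of A xα at x m
  have hval : ∀ m, (A xα) (x m)
      = (((lam m / (α * lam m + (lam m) ^ 2) : ℝ) : ℂ) * f (x m) * (lam m : ℂ)) := by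
    intro m
    have hE := (NormedSpace.inclusionInDoubleDual ℂ X (x m)).hasSum hAxα
    have hfun : (fun n => (NormedSpace.inclusionInDoubleDual ℂ X (x m))
        (((((lam n / (α * lam n + (lam n) ^ 2) : ℝ) : ℂ) * f (x n) * (lam n : ℂ))) • l n))
        = fun n => if n = m
          then (((lam m / (α * lam m + (lam m) ^ 2) : ℝ) : ℂ) * f (x m) * (lam m : ℂ)) else 0 := by
      funext n
      rw [map_smul]
      simp only [NormedSpace.dual_def, smul_eq_mul, hdual n m]
      by_cases h : n = m
      · subst h; simp
      · simp [h]
    rw [hfun] at hE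
    have h2 := hasSum_ite_eq m
      ((((lam m / (α * lam m + (lam m) ^ 2) : ℝ) : ℂ) * f (x m) * (lam m : ℂ)))
    have h3 := h2.unique hE
    simpa [NormedSpace.dual_def] using h3.symm
  -- normal equation
  have hL0 : ∀ e : X, (α : ℂ) * (A xα) e + (A xα - f) (D.symm (A e)) = 0 := by
    have hScl : IsClosed {e : X | (α : ℂ) * (A xα) e + (A xα - f) (D.symm (A e)) = 0} := by
      have hc : Continuous fun e : X => (α : ℂ) * (A xα) e + (A xα - f) (D.symm (A e)) := by
        fun_prop
      exact isClosed_eq hc continuous_const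
    set S : Submodule ℂ X :=
      { carrier := {e : X | (α : ℂ) * (A xα) e + (A xα - f) (D.symm (A e)) = 0}
        add_mem' := by
          intro a b ha hb
          simp only [Set.mem_setOf_eq] at *
          simp only [map_add, ContinuousLinearMap.add_apply]
          linear_combination ha + hb
        zero_mem' := by simp
        smul_mem' := by
          intro c a ha
          simp only [Set.mem_setOf_eq] at *
          simp only [map_smulₛₗ, map_smul, ContinuousLinearMap.map_smulₛₗ, smul_eq_mul,
            starRingEnd_apply, star_star, RingHom.id_apply]
          linear_combination c * ha } with hS
    have hmem : ∀ m, x m ∈ S := by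
      intro m
      show (α : ℂ) * (A xα) (x m) + (A xα - f) (D.symm (A (x m))) = 0
      rw [hval m, hAx m]
      have hsymm : (D.symm ((lam m : ℂ) • l m) : X) = (lam m : ℂ) • x m := by
        rw [map_smulₛₗ, hxl m]
        simp [Complex.conj_ofReal]
      rw [hsymm]
      simp only [ContinuousLinearMap.sub_apply, map_smul, smul_eq_mul, hval m]
      have hd : ((α * lam m + (lam m) ^ 2 : ℝ) : ℂ) ≠ 0 := by
        have : (0:ℝ) < α * lam m + (lam m) ^ 2 := by
          have := hlampos m
          positivity
        exact_mod_cast ne_of_gt this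
      push_cast
      push_cast at hd
      have hd2 : (lam m : ℂ) + (α : ℂ) ≠ 0 := by
        have : (0:ℝ) < lam m + α := by
          have := hlampos m
          positivity
        exact_mod_cast ne_of_gt this
      field_simp
      linear_combination ((lam m : ℂ) * f (x m)) * mul_inv_cancel₀ hd2
    have hle : Submodule.span ℂ (Set.range x) ≤ S :=
      Submodule.span_le.2 (by rintro _ ⟨m, rfl⟩; exact hmem m)
    have htop : (⊤ : Submodule ℂ X) ≤ S := by
      rw [← hspan]
      exact Submodule.topologicalClosure_minimal _ hle hScl
    exact fun e => htop (Submodule.mem_top)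
  -- final comparison
  intro y
  set e : X := y - xα with he
  have hy : y = xα + e := by rw [he]; abel
  have hBy : (A y) y = (A xα) xα + (A xα) e + (A e) xα + (A e) e := by
    rw [hy]
    simp only [map_add, ContinuousLinearMap.add_apply]
    ring
  have hcross : ((A xα - f) (D.symm (A e))) = -((α : ℂ) * (A xα) e) := by
    linear_combination hL0 e
  have hnorm : ‖A y - f‖ ^ 2
      = ‖A xα - f‖ ^ 2 + 2 * ((A xα - f) (D.symm (A e))).re + ‖A e‖ ^ 2 := by
    have h1 : A y - f = (A xα - f) + A e := by rw [hy, map_add]; abel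
    rw [h1]
    have h2 : ‖(A xα - f) + A e‖ = ‖(D.symm ((A xα - f) + A e) : X)‖ :=
      (D.symm.norm_map _).symm
    rw [h2, map_add]
    have h3 := norm_add_sq (𝕜 := ℂ) (D.symm (A xα - f) : X) (D.symm (A e) : X)
    rw [h3, D.symm.norm_map, D.symm.norm_map]
    have h4 : (inner ℂ (D.symm (A xα - f) : X) (D.symm (A e) : X) : ℂ)
        = (A xα - f) (D.symm (A e)) := InnerProductSpace.toDual_symm_apply
    rw [h4]
    norm_num
  rw [hBy, hnorm, hcross]
  have hsy := hsym e xα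
  have hree := hre e
  have hns : (0:ℝ) ≤ ‖A e‖ ^ 2 := by positivity
  simp only [Complex.add_re, Complex.neg_re, Complex.mul_re, Complex.ofReal_re,
    Complex.ofReal_im, zero_mul, mul_zero]
  nlinarith [mul_nonneg hα.le hree]
end

section
/- If T : V → V is bounded and can be written as the sum of a coercive operator and a compact operator on a closed subspace W ⊆ V, and the imaginary part Im(T) is strictly positive on W\{0}, then there is a constant c > 0 such that |(Tv, v)_V| ≥ c‖v‖² for all v ∈ W (i.e., T is strictly coercive in modulus on W). -/
open Filter Topology ContinuousLinearMap

/-- A bounded complex-valued function converges along any ultrafilter. -/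
lemma stmt18_aux_ultralim {α : Type*} (ℱ : Ultrafilter α) (f : α → ℂ) (M : ℝ)
    (hf : ∀ a, ‖f a‖ ≤ M) : ∃ z, ‖z‖ ≤ M ∧ Filter.Tendsto f ℱ (𝓝 z) := by
  have hK : IsCompact (Metric.closedBall (0:ℂ) M) := isCompact_closedBall 0 M
  have hle : (ℱ.map f : Filter ℂ) ≤ 𝓟 (Metric.closedBall (0:ℂ) M) := by
    simp only [Filter.le_principal_iff]
    exact Filter.eventually_map.2 (Filter.Eventually.of_forall fun a => by
      simpa [Metric.mem_closedBall, dist_zero_right] using hf a)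
  obtain ⟨z, hzK, hz⟩ := hK.ultrafilter_le_nhds (ℱ.map f) hle
  exact ⟨z, by simpa [Metric.mem_closedBall, dist_zero_right] using hzK, hz⟩

/-- A function with values in a compact set converges along any ultrafilter. -/
lemma stmt18_aux_ultralim' {α X : Type*} [TopologicalSpace X] (ℱ : Ultrafilter α) (f : α → X)
    (K : Set X) (hK : IsCompact K) (hf : ∀ a, f a ∈ K) :
    ∃ y, Filter.Tendsto f ℱ (𝓝 y) := by
  have hle : (ℱ.map f : Filter X) ≤ 𝓟 K := by
    simp only [Filter.le_principal_iff]
    exact Filter.eventually_map.2 (Filter.Eventually.of_forall hf)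
  obtain ⟨y, _, hy⟩ := hK.ultrafilter_le_nhds (ℱ.map f) hle
  exact ⟨y, hy⟩

/-- If `T : V → V` is bounded, its real part `Re(T) = (T + T*)/2` is the sum of an
operator coercive on the closed subspace `W` and a compact operator, and its imaginary
part `Im(T) = (T - T*)/(2i)` is strictly positive on `W \ {0}`, then there is `c > 0`
with `|(Tv, v)| ≥ c‖v‖²` for all `v ∈ W`, i.e. `T` is strictly coercive in modulus
on `W`. -/
theorem stmt18 {V : Type*} [NormedAddCommGroup V] [InnerProductSpace ℂ V] [CompleteSpace V]
    (T : V →L[ℂ] V) (W : Submodule ℂ V) (hW : IsClosed (W : Set V))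
    (T₀ C : V →L[ℂ] V) (c₀ : ℝ) (hc₀ : 0 < c₀)
    (hRe : (2 : ℂ)⁻¹ • (T + ContinuousLinearMap.adjoint T) = T₀ + C)
    (hT₀ : ∀ v ∈ W, c₀ * ‖v‖ ^ 2 ≤ ((inner ℂ (T₀ v) v : ℂ)).re)
    (hC : IsCompactOperator ⇑C)
    (hIm : ∀ v ∈ W, v ≠ 0 →
      0 < ((inner ℂ (((2 * Complex.I : ℂ)⁻¹ •
        (T - ContinuousLinearMap.adjoint T)) v) v : ℂ)).re) :
    ∃ c > 0, ∀ v ∈ W, c * ‖v‖ ^ 2 ≤ ‖(inner ℂ (T v) v : ℂ)‖ := by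
  by_contra hcon
  push_neg at hcon
  -- extract a normalized sequence in `W` with `⟪T uₙ, uₙ⟫ → 0`
  have hseq : ∀ n : ℕ, ∃ u, u ∈ W ∧ ‖u‖ = 1 ∧
      ‖(inner ℂ (T u) u : ℂ)‖ < 1 / (n + 1) := by
    intro n
    obtain ⟨v, hvW, hv⟩ := hcon (1 / (n + 1)) (by positivity)
    have hv0 : v ≠ 0 := by
      rintro rfl
      simp at hv
    have hnv : (0:ℝ) < ‖v‖ := norm_pos_iff.2 hv0
    refine ⟨(‖v‖⁻¹ : ℂ) • v, W.smul_mem _ hvW, ?_, ?_⟩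
    · simp [norm_smul, abs_of_pos, hnv, inv_mul_cancel₀ hnv.ne']
    · have hin : (inner ℂ (T ((‖v‖⁻¹ : ℂ) • v)) ((‖v‖⁻¹ : ℂ) • v) : ℂ)
          = (‖v‖⁻¹ : ℂ) * (starRingEnd ℂ (‖v‖⁻¹ : ℂ)) * inner ℂ (T v) v := by
        simp [inner_smul_left, inner_smul_right]
        ring
      rw [hin]
      have hconj : (starRingEnd ℂ (‖v‖⁻¹ : ℂ)) = (‖v‖⁻¹ : ℂ) := by
        simp [Complex.conj_ofReal]
      rw [hconj, norm_mul, norm_mul]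
      have h1 : ‖((‖v‖ : ℂ))⁻¹‖ = ‖v‖⁻¹ := by
        rw [norm_inv, Complex.norm_real, Real.norm_of_nonneg hnv.le]
      rw [h1]
      calc ‖v‖⁻¹ * ‖v‖⁻¹ * ‖(inner ℂ (T v) v : ℂ)‖
          < ‖v‖⁻¹ * ‖v‖⁻¹ * (1 / (n + 1) * ‖v‖ ^ 2) := by
            apply mul_lt_mul_of_pos_left hv (by positivity)
        _ = 1 / (n + 1) := by
            rw [pow_two]
            field_simp
  choose u huW hu1 hut using hseq
  -- the ultrafilter
  set ℱ : Ultrafilter ℕ := Ultrafilter.of atTop with hℱdef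
  have hℱ : (ℱ : Filter ℕ) ≤ atTop := Ultrafilter.of_le _
  -- ⟪T uₙ, uₙ⟫ → 0
  have ht : Filter.Tendsto (fun n => (inner ℂ (T (u n)) (u n) : ℂ)) ℱ (𝓝 0) := by
    refine Filter.Tendsto.mono_left ?_ hℱ
    apply squeeze_zero_norm (fun n => (hut n).le)
    exact tendsto_one_div_add_atTop_nhds_zero_nat
  -- weak limit along ℱ via Riesz representation
  have hglim : ∀ w : V, ∃ z : ℂ, ‖z‖ ≤ ‖w‖ ∧
      Filter.Tendsto (fun n => (inner ℂ (u n) w : ℂ)) ℱ (𝓝 z) := by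
    intro w
    apply stmt18_aux_ultralim
    intro n
    calc ‖(inner ℂ (u n) w : ℂ)‖ ≤ ‖u n‖ * ‖w‖ := norm_inner_le_norm _ _
      _ = ‖w‖ := by rw [hu1 n, one_mul]
  choose g hgle hg using hglim
  have hadd : ∀ w w', g (w + w') = g w + g w' := by
    intro w w'
    refine tendsto_nhds_unique (hg (w + w')) ?_
    have := (hg w).add (hg w')
    simpa [inner_add_right] using this
  have hsmul : ∀ (c : ℂ) (w : V), g (c • w) = c * g w := by
    intro c w
    refine tendsto_nhds_unique (hg (c • w)) ?_
    have := (hg w).const_mul c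
    simpa [inner_smul_right] using this
  let φ : V →L[ℂ] ℂ := LinearMap.mkContinuous
    { toFun := g, map_add' := hadd, map_smul' := hsmul } 1
    (fun w => by simpa using hgle w)
  obtain ⟨v, hvφ⟩ : ∃ v : V, ∀ w : V, (inner ℂ v w : ℂ) = g w :=
    ⟨(InnerProductSpace.toDual ℂ V).symm φ, fun w => InnerProductSpace.toDual_symm_apply⟩
  have hv : ∀ w : V, Filter.Tendsto (fun n => (inner ℂ (u n) w : ℂ)) ℱ (𝓝 (inner ℂ v w)) := by
    intro w
    rw [hvφ w]
    exact hg w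
  -- v ∈ W
  haveI : CompleteSpace W := hW.completeSpace_coe
  have hvW : v ∈ W := by
    rw [← Submodule.orthogonal_orthogonal W, Submodule.mem_orthogonal]
    intro x hx
    have h0 : ∀ n, (inner ℂ (u n) x : ℂ) = 0 := fun n =>
      (Submodule.mem_orthogonal W x).mp hx (u n) (huW n)
    have hvx : (inner ℂ v x : ℂ) = 0 := by
      refine tendsto_nhds_unique (hv x) ?_
      simpa [h0] using (tendsto_const_nhds : Filter.Tendsto (fun _ : ℕ => (0:ℂ)) ℱ (𝓝 0))
    rw [← inner_conj_symm, hvx, map_zero]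
  -- strong limit of C uₙ
  obtain ⟨K, hKc, hKm⟩ := hC
  obtain ⟨r, hr, hball⟩ := Metric.mem_nhds_iff.mp hKm
  have hrc : (((r/2 : ℝ)) : ℂ) ≠ 0 := by
    simp only [ne_eq, Complex.ofReal_eq_zero]
    positivity
  have hCu : ∀ n, C (u n) ∈ (fun x : V => (((r/2 : ℝ)) : ℂ)⁻¹ • x) '' K := by
    intro n
    refine ⟨C ((((r/2 : ℝ)) : ℂ) • u n), hball ?_, ?_⟩
    · simp only [Metric.mem_ball, Set.mem_setOf_eq, dist_zero_right, norm_smul, hu1, mul_one,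
        Complex.norm_real, Real.norm_eq_abs]
      rw [abs_of_pos (by positivity)]
      linarith
    · simp only [map_smul]
      rw [smul_smul, inv_mul_cancel₀ hrc, one_smul]
  have hKc' : IsCompact ((fun x : V => (((r/2 : ℝ)) : ℂ)⁻¹ • x) '' K) :=
    hKc.image (continuous_const_smul _)
  obtain ⟨y, hy⟩ := stmt18_aux_ultralim' ℱ (fun n => C (u n)) _ hKc' hCu
  have hyCv : y = C v := by
    apply ext_inner_right ℂ
    intro w
    have h1 : Filter.Tendsto (fun n => (inner ℂ (C (u n)) w : ℂ)) ℱ (𝓝 (inner ℂ y w)) :=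
      hy.inner tendsto_const_nhds
    have h2 : Filter.Tendsto (fun n => (inner ℂ (C (u n)) w : ℂ)) ℱ
        (𝓝 (inner ℂ v (ContinuousLinearMap.adjoint C w))) := by
      have := hv (ContinuousLinearMap.adjoint C w)
      simpa [ContinuousLinearMap.adjoint_inner_right] using this
    have := tendsto_nhds_unique h1 h2
    rw [this, ContinuousLinearMap.adjoint_inner_right]
  rw [hyCv] at hy
  -- ⟪C uₙ, uₙ⟫ → ⟪C v, v⟫
  have hCuu : Filter.Tendsto (fun n => (inner ℂ (C (u n)) (u n) : ℂ)) ℱ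
      (𝓝 (inner ℂ (C v) v)) := by
    have hsplit : ∀ n, (inner ℂ (C (u n)) (u n) : ℂ)
        = inner ℂ (C (u n) - C v) (u n) + inner ℂ (C v) (u n) := by
      intro n
      rw [inner_sub_left]
      ring
    simp only [hsplit]
    have hfirst : Filter.Tendsto (fun n => (inner ℂ (C (u n) - C v) (u n) : ℂ)) ℱ (𝓝 0) := by
      apply squeeze_zero_norm (f := fun n => (inner ℂ (C (u n) - C v) (u n) : ℂ))
        (a := fun n => ‖C (u n) - C v‖)
      · intro n
        calc ‖(inner ℂ (C (u n) - C v) (u n) : ℂ)‖ ≤ ‖C (u n) - C v‖ * ‖u n‖ :=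
              norm_inner_le_norm _ _
          _ = ‖C (u n) - C v‖ := by rw [hu1 n, mul_one]
      · have : Filter.Tendsto (fun n => C (u n) - C v) ℱ (𝓝 (C v - C v)) :=
          hy.sub tendsto_const_nhds
        simpa using this.norm
    have hsecond : Filter.Tendsto (fun n => (inner ℂ (C v) (u n) : ℂ)) ℱ
        (𝓝 (inner ℂ (C v) v)) := by
      have h1 := (hv (C v)).star
      have h2 : ∀ n, star (inner ℂ (u n) (C v) : ℂ) = inner ℂ (C v) (u n) := fun n =>
        inner_conj_symm _ _
      have h3 : star (inner ℂ v (C v) : ℂ) = inner ℂ (C v) v := inner_conj_symm _ _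
      simpa [h2, h3] using h1
    simpa using hfirst.add hsecond
  -- Real part identity
  have hReId : ∀ x : V, ((inner ℂ (T₀ x) x : ℂ)).re + ((inner ℂ (C x) x : ℂ)).re
      = ((inner ℂ (T x) x : ℂ)).re := by
    intro x
    have h := congrArg (fun A : V →L[ℂ] V => (inner ℂ (A x) x : ℂ)) hRe
    simp only [ContinuousLinearMap.smul_apply, ContinuousLinearMap.add_apply,
      inner_smul_left, inner_add_left] at h
    rw [ContinuousLinearMap.adjoint_inner_left] at h
    have hconj2 : (starRingEnd ℂ) (2 : ℂ)⁻¹ = (2 : ℂ)⁻¹ := by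
      rw [map_inv₀, map_ofNat]
    rw [hconj2] at h
    have hcc : (inner ℂ x (T x) : ℂ) = (starRingEnd ℂ) (inner ℂ (T x) x) :=
      (inner_conj_symm _ _).symm
    rw [hcc, Complex.add_conj] at h
    have := congrArg Complex.re h
    simp only [Complex.add_re] at this
    rw [← this]
    rw [show ((2 : ℂ))⁻¹ * ((2 * (inner ℂ (T x) x : ℂ).re : ℝ) : ℂ)
        = (((inner ℂ (T x) x : ℂ).re : ℝ) : ℂ) by push_cast; ring]
    simp
  -- limit of real parts
  have hReT : Filter.Tendsto (fun n => ((inner ℂ (T (u n)) (u n) : ℂ)).re) ℱ (𝓝 0) := by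
    have := (Complex.continuous_re.tendsto 0).comp ht
    simpa [Function.comp_def] using this
  have hReC : Filter.Tendsto (fun n => ((inner ℂ (C (u n)) (u n) : ℂ)).re) ℱ
      (𝓝 (((inner ℂ (C v) v : ℂ)).re)) :=
    (Complex.continuous_re.tendsto _).comp hCuu
  have hineq : ∀ n, c₀ + ((inner ℂ (C (u n)) (u n) : ℂ)).re
      ≤ ((inner ℂ (T (u n)) (u n) : ℂ)).re := by
    intro n
    have h1 := hT₀ (u n) (huW n)
    rw [hu1 n] at h1
    simp only [one_pow, mul_one] at h1
    have h2 := hReId (u n)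
    linarith
  have hCvle : c₀ + ((inner ℂ (C v) v : ℂ)).re ≤ 0 :=
    le_of_tendsto_of_tendsto' (tendsto_const_nhds.add hReC) hReT hineq
  have hvne : v ≠ 0 := by
    rintro rfl
    simp only [inner_zero_right, Complex.zero_re] at hCvle
    linarith
  -- the operator S = Im T
  set S : V →L[ℂ] V := (2 * Complex.I : ℂ)⁻¹ • (T - ContinuousLinearMap.adjoint T) with hSdef
  have hSexp : ∀ x y : V, (inner ℂ (S x) y : ℂ)
      = (starRingEnd ℂ) ((2 * Complex.I : ℂ)⁻¹) * ((inner ℂ (T x) y : ℂ) - inner ℂ x (T y)) := by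
    intro x y
    rw [hSdef]
    simp only [ContinuousLinearMap.smul_apply, ContinuousLinearMap.sub_apply,
      inner_smul_left, inner_sub_left, ContinuousLinearMap.adjoint_inner_left]
  have hconjI : (starRingEnd ℂ) ((2 * Complex.I : ℂ)⁻¹) = -((2 * Complex.I : ℂ)⁻¹) := by
    rw [map_inv₀, map_mul, Complex.conj_I, map_ofNat, mul_neg, inv_neg]
  -- S is Hermitian as a form
  have hS1 : ∀ x y : V, (starRingEnd ℂ) (inner ℂ (S y) x : ℂ) = inner ℂ (S x) y := by
    intro x y
    rw [hSexp y x, hSexp x y, map_mul, map_sub, Complex.conj_conj, inner_conj_symm,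
      inner_conj_symm, hconjI]
    ring
  -- the quadratic form of S is minus the imaginary part of that of T
  have h2I : ((2 * Complex.I : ℂ))⁻¹ = -Complex.I / 2 := by
    rw [eq_div_iff (two_ne_zero (α := ℂ))]
    rw [inv_mul_eq_div, div_eq_iff (by simp [Complex.I_ne_zero] : (2 * Complex.I : ℂ) ≠ 0)]
    simp [Complex.I_mul_I]
    ring_nf
    rw [Complex.I_sq]
    ring
  have hq : ∀ x : V, ((inner ℂ (S x) x : ℂ)).re = -((inner ℂ (T x) x : ℂ)).im := by
    intro x
    rw [hSexp x x]
    have hcc : (inner ℂ x (T x) : ℂ) = (starRingEnd ℂ) (inner ℂ (T x) x) :=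
      (inner_conj_symm _ _).symm
    rw [hcc, Complex.sub_conj, hconjI, h2I]
    simp only [Complex.mul_re, Complex.neg_re, Complex.neg_im, Complex.div_re, Complex.div_im,
      Complex.I_re, Complex.I_im, Complex.mul_im, Complex.ofReal_re, Complex.ofReal_im]
    norm_num
    ring
  -- nonnegativity of the S-form on W
  have hq0 : ∀ x ∈ W, 0 ≤ ((inner ℂ (S x) x : ℂ)).re := by
    intro x hx
    rcases eq_or_ne x 0 with rfl | hne
    · simp
    · exact (hIm x hx hne).le
  -- Cauchy–Schwarz for the S-form on W
  letI coreS : PreInnerProductSpace.Core ℂ W :=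
    { inner := fun x y => (inner ℂ (S (x : V)) (y : V) : ℂ)
      conj_inner_symm := fun x y => hS1 (x : V) (y : V)
      re_inner_nonneg := fun x => hq0 (x : V) x.2
      add_left := fun x y z => by
        simp only [Submodule.coe_add, map_add, inner_add_left]
      smul_left := fun x y r => by
        simp only [Submodule.coe_smul, map_smul, inner_smul_left] }
  have hCS : ∀ x y : W, ‖(inner ℂ (S (x : V)) (y : V) : ℂ)‖ * ‖(inner ℂ (S (y : V)) (x : V) : ℂ)‖
      ≤ ((inner ℂ (S (x : V)) (x : V) : ℂ)).re * ((inner ℂ (S (y : V)) (y : V) : ℂ)).re := by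
    intro x y
    have := InnerProductSpace.Core.inner_mul_inner_self_le (𝕜 := ℂ) (F := W) x y
    exact this
  -- pass to the limit in Cauchy–Schwarz
  have ha : Filter.Tendsto (fun n => ((inner ℂ (S (u n)) (u n) : ℂ)).re) ℱ (𝓝 0) := by
    have him : Filter.Tendsto (fun n => ((inner ℂ (T (u n)) (u n) : ℂ)).im) ℱ (𝓝 0) := by
      have := (Complex.continuous_im.tendsto 0).comp ht
      simpa [Function.comp_def] using this
    have := him.neg
    simp only [neg_zero] at this
    simpa only [hq] using this
  have hSvu : ∀ x : V, (inner ℂ (S x) v : ℂ) = inner ℂ x (S v) := by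
    intro x
    rw [← hS1 x v, inner_conj_symm]
  have hb : Filter.Tendsto (fun n => ‖(inner ℂ (S (u n)) v : ℂ)‖) ℱ
      (𝓝 ‖(inner ℂ v (S v) : ℂ)‖) := by
    have := (hv (S v)).norm
    simpa only [hSvu] using this
  have hvSv : (inner ℂ v (S v) : ℂ) = inner ℂ (S v) v := hSvu v ▸ rfl
  have hCSn : ∀ n, ‖(inner ℂ (S (u n)) v : ℂ)‖ * ‖(inner ℂ (S (u n)) v : ℂ)‖
      ≤ ((inner ℂ (S (u n)) (u n) : ℂ)).re * ((inner ℂ (S v) v : ℂ)).re := by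
    intro n
    have h := hCS ⟨u n, huW n⟩ ⟨v, hvW⟩
    have heq : ‖(inner ℂ (S v) (u n) : ℂ)‖ = ‖(inner ℂ (S (u n)) v : ℂ)‖ := by
      rw [← hS1 (u n) v]
      exact (RCLike.norm_conj _).symm
    rw [heq] at h
    exact h
  have hfin : ‖(inner ℂ v (S v) : ℂ)‖ * ‖(inner ℂ v (S v) : ℂ)‖ ≤ 0 := by
    have hlim2 : Filter.Tendsto
        (fun n => ((inner ℂ (S (u n)) (u n) : ℂ)).re * ((inner ℂ (S v) v : ℂ)).re) ℱ (𝓝 0) := by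
      have := ha.mul_const (((inner ℂ (S v) v : ℂ)).re)
      simpa using this
    exact le_of_tendsto_of_tendsto' (hb.mul hb) hlim2 hCSn
  have hzero : (inner ℂ (S v) v : ℂ) = 0 := by
    have h1 : ‖(inner ℂ v (S v) : ℂ)‖ = 0 := by nlinarith [norm_nonneg (inner ℂ v (S v) : ℂ)]
    have h2 : (inner ℂ v (S v) : ℂ) = 0 := norm_eq_zero.mp h1
    rw [← hvSv, h2]
  have hpos := hIm v hvW hvne
  rw [hzero] at hpos
  simp at hpos
end
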